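/- Let U ⊆ ℝⁿ, F : U → ℝⁿ, x̄ ∈ U with F(x̄) = 0, and c > 0 such that ‖F(y) − H(y − x̄)‖ ≤ c·‖y − x̄‖ for all y ∈ U and all H in a set 𝓗F(y) ⊆ ℝ^{n×n}. Fix y ∈ U, H ∈ 𝓗F(y), ε > 0, δ ∈ (0, 1), and let S be a random d×n matrix such that S·H·Sᵀ is almost surely invertible and with probability at least 1 − δ the following three inequalities hold simultaneously: (i) ‖Sᵀ·S·H·Sᵀ·S − H‖ ≤ ε; (ii) ‖y − x̄ − Sᵀ(S·H·Sᵀ)⁻¹·S·F(y)‖ ≤ (1 + ε)·‖S·y − S·x̄ − (S·H·Sᵀ)⁻¹·S·F(y)‖; (iii) ‖S·F(y) − (S·H·Sᵀ)·S·(y − x̄)‖ ≤ (1 + ε)·‖F(y) − Sᵀ·(S·H·Sᵀ)·S·(y − x̄)‖. Then, with y⁺ := y − Sᵀ(S·H·Sᵀ)⁻¹·S·F(y), ℙ( ‖y⁺ − x̄‖ ≤ (1 + ε)²·(c + ε)·‖(S·H·Sᵀ)⁻¹‖·‖y − x̄‖ ) ≥ 1 − δ. -/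

import Mathlib

open MeasureTheory

/-- Probabilistic one-step contraction estimate for the sketched Newton-type method. -/
theorem stmt_15 {n d : ℕ}
    {Ωp : Type*} [MeasurableSpace Ωp] (μ : Measure Ωp) [IsProbabilityMeasure μ]
    (U : Set (EuclideanSpace ℝ (Fin n)))
    (F : EuclideanSpace ℝ (Fin n) → EuclideanSpace ℝ (Fin n))
    (xbar : EuclideanSpace ℝ (Fin n)) (hxbar : xbar ∈ U) (hFxbar : F xbar = 0)
    (HF : EuclideanSpace ℝ (Fin n) →
      Set (EuclideanSpace ℝ (Fin n) →L[ℝ] EuclideanSpace ℝ (Fin n)))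
    (c : ℝ) (hc : 0 < c)
    (hND : ∀ y ∈ U, ∀ H ∈ HF y, ‖F y - H (y - xbar)‖ ≤ c * ‖y - xbar‖)
    (y : EuclideanSpace ℝ (Fin n)) (hy : y ∈ U)
    (H : EuclideanSpace ℝ (Fin n) →L[ℝ] EuclideanSpace ℝ (Fin n)) (hH : H ∈ HF y)
    (ε : ℝ) (hε : 0 < ε) (δ : ℝ) (hδ : δ ∈ Set.Ioo (0 : ℝ) 1)
    (Sr : Ωp → (EuclideanSpace ℝ (Fin n) →L[ℝ] EuclideanSpace ℝ (Fin d)))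
    (A : Ωp → (EuclideanSpace ℝ (Fin d) →L[ℝ] EuclideanSpace ℝ (Fin d)))
    (hA : ∀ ω, A ω = ((Sr ω).comp H).comp (ContinuousLinearMap.adjoint (Sr ω)))
    (hAunit : ∀ᵐ ω ∂μ, IsUnit (A ω))
    (hprob : 1 - δ ≤ (μ {ω |
      ‖((ContinuousLinearMap.adjoint (Sr ω)).comp (A ω)).comp (Sr ω) - H‖ ≤ ε ∧
      ‖y - xbar - (ContinuousLinearMap.adjoint (Sr ω)) (Ring.inverse (A ω) (Sr ω (F y)))‖
        ≤ (1 + ε) * ‖Sr ω y - Sr ω xbar - Ring.inverse (A ω) (Sr ω (F y))‖ ∧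
      ‖Sr ω (F y) - A ω (Sr ω (y - xbar))‖
        ≤ (1 + ε) * ‖F y - (ContinuousLinearMap.adjoint (Sr ω)) (A ω (Sr ω (y - xbar)))‖}).toReal)
    (yp : Ωp → EuclideanSpace ℝ (Fin n))
    (hyp : ∀ ω, yp ω = y - (ContinuousLinearMap.adjoint (Sr ω)) (Ring.inverse (A ω) (Sr ω (F y)))) :
    1 - δ ≤ (μ {ω |
      ‖yp ω - xbar‖ ≤ (1 + ε) ^ 2 * (c + ε) * ‖Ring.inverse (A ω)‖ * ‖y - xbar‖}).toReal := by
  classical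
  set E : Set Ωp := {ω |
      ‖((ContinuousLinearMap.adjoint (Sr ω)).comp (A ω)).comp (Sr ω) - H‖ ≤ ε ∧
      ‖y - xbar - (ContinuousLinearMap.adjoint (Sr ω)) (Ring.inverse (A ω) (Sr ω (F y)))‖
        ≤ (1 + ε) * ‖Sr ω y - Sr ω xbar - Ring.inverse (A ω) (Sr ω (F y))‖ ∧
      ‖Sr ω (F y) - A ω (Sr ω (y - xbar))‖
        ≤ (1 + ε) * ‖F y - (ContinuousLinearMap.adjoint (Sr ω)) (A ω (Sr ω (y - xbar)))‖} with hE
  set T : Set Ωp := {ω |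
      ‖yp ω - xbar‖ ≤ (1 + ε) ^ 2 * (c + ε) * ‖Ring.inverse (A ω)‖ * ‖y - xbar‖} with hT
  set G : Set Ωp := {ω | IsUnit (A ω)} with hG
  -- pointwise implication
  have hsub : E ∩ G ⊆ T := by
    rintro ω ⟨⟨h1, h2, h3⟩, hunit⟩
    set S := Sr ω
    set B := Ring.inverse (A ω) with hB
    have hBA : ∀ v, B (A ω v) = v := by
      intro v
      have : (B * A ω) v = v := by
        rw [hB, Ring.inverse_mul_cancel _ hunit]; rfl
      simpa [ContinuousLinearMap.mul_apply] using this
    have hεpos : (0:ℝ) ≤ 1 + ε := by linarith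
    have h4 : ‖F y - (ContinuousLinearMap.adjoint S) (A ω (S (y - xbar)))‖
        ≤ (c + ε) * ‖y - xbar‖ := by
      have e : F y - (ContinuousLinearMap.adjoint S) (A ω (S (y - xbar)))
          = (F y - H (y - xbar)) -
            ((((ContinuousLinearMap.adjoint S).comp (A ω)).comp S - H) (y - xbar)) := by
        simp only [ContinuousLinearMap.sub_apply, ContinuousLinearMap.comp_apply]
        abel
      rw [e]
      have hb1 := hND y hy H hH
      have hb2 : ‖(((ContinuousLinearMap.adjoint S).comp (A ω)).comp S - H) (y - xbar)‖
          ≤ ε * ‖y - xbar‖ :=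
        le_trans (ContinuousLinearMap.le_opNorm _ _)
          (mul_le_mul_of_nonneg_right h1 (norm_nonneg _))
      calc ‖(F y - H (y - xbar)) -
            ((((ContinuousLinearMap.adjoint S).comp (A ω)).comp S - H) (y - xbar))‖
          ≤ ‖F y - H (y - xbar)‖ +
            ‖(((ContinuousLinearMap.adjoint S).comp (A ω)).comp S - H) (y - xbar)‖ :=
            norm_sub_le _ _
        _ ≤ c * ‖y - xbar‖ + ε * ‖y - xbar‖ := add_le_add hb1 hb2
        _ = (c + ε) * ‖y - xbar‖ := by ring
    have key : S y - S xbar - B (S (F y))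
        = B (A ω (S (y - xbar)) - S (F y)) := by
      rw [map_sub B, hBA, map_sub S]
    have step2 : ‖S y - S xbar - B (S (F y))‖
        ≤ ‖B‖ * ((1 + ε) * ((c + ε) * ‖y - xbar‖)) := by
      rw [key]
      calc ‖B (A ω (S (y - xbar)) - S (F y))‖
          ≤ ‖B‖ * ‖A ω (S (y - xbar)) - S (F y)‖ := ContinuousLinearMap.le_opNorm _ _
        _ = ‖B‖ * ‖S (F y) - A ω (S (y - xbar))‖ := by rw [norm_sub_rev]
        _ ≤ ‖B‖ * ((1 + ε) * ‖F y - (ContinuousLinearMap.adjoint S) (A ω (S (y - xbar)))‖) :=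
            mul_le_mul_of_nonneg_left h3 (norm_nonneg _)
        _ ≤ ‖B‖ * ((1 + ε) * ((c + ε) * ‖y - xbar‖)) := by
            apply mul_le_mul_of_nonneg_left _ (norm_nonneg _)
            exact mul_le_mul_of_nonneg_left h4 hεpos
    have hfinal : ‖yp ω - xbar‖
        ≤ (1 + ε) ^ 2 * (c + ε) * ‖B‖ * ‖y - xbar‖ := by
      have e0 : yp ω - xbar = y - xbar - (ContinuousLinearMap.adjoint S) (B (S (F y))) := by
        rw [hyp ω]; abel
      calc ‖yp ω - xbar‖
          = ‖y - xbar - (ContinuousLinearMap.adjoint S) (B (S (F y)))‖ := by rw [e0]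
        _ ≤ (1 + ε) * ‖S y - S xbar - B (S (F y))‖ := h2
        _ ≤ (1 + ε) * (‖B‖ * ((1 + ε) * ((c + ε) * ‖y - xbar‖))) :=
            mul_le_mul_of_nonneg_left step2 hεpos
        _ = (1 + ε) ^ 2 * (c + ε) * ‖B‖ * ‖y - xbar‖ := by ring
    exact hfinal
  -- measure step
  have hnull : μ (E \ G) = 0 := by
    have h0 : μ Gᶜ = 0 := by
      rw [hG]
      rw [Set.compl_setOf]; exact ae_iff.mp hAunit
    exact measure_mono_null (fun ω hω => hω.2) h0
  have hle : μ E ≤ μ T := by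
    calc μ E ≤ μ (E ∩ G) + μ (E \ G) := measure_le_inter_add_diff μ E G
      _ = μ (E ∩ G) := by rw [hnull, add_zero]
      _ ≤ μ T := measure_mono hsub
  exact le_trans hprob (ENNReal.toReal_mono (measure_ne_top μ T) hle)
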